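/- Every finite-dimensional normed vector space V over a complete discretely valued non-archimedean field admits an orthogonal basis, i.e. a basis {v_1,…,v_d} such that ||Σ λ_i v_i|| = max_i |λ_i|·||v_i|| for all scalars λ_i. -/

import Mathlib

open Filter

section helpers

lemma finSupLe {m : ℕ} (g : Fin m → ℝ) (b : ℝ) (h : ∀ i, g i ≤ b) (hb : 0 ≤ b) :
    (⨆ i, g i) ≤ b := Real.iSup_le h hb

lemma leFinSup {m : ℕ} (g : Fin m → ℝ) (i : Fin m) : g i ≤ ⨆ j, g j :=
  le_ciSup ((Set.finite_range g).bddAbove) i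

lemma supEmpty {ι : Sort*} [IsEmpty ι] (g : ι → ℝ) : (⨆ i, g i) = 0 := by
  rw [iSup, Set.range_eq_empty, Real.sSup_empty]

lemma finSupSplit (n : ℕ) (g : Fin (n + 1) → ℝ) (hg : ∀ i, 0 ≤ g i) :
    (⨆ i, g i) = max (⨆ i : Fin n, g i.castSucc) (g (Fin.last n)) := by
  refine le_antisymm (Real.iSup_le (fun i => ?_) ?_) (max_le ?_ (leFinSup _ _))
  · refine Fin.lastCases ?_ (fun j => ?_) i
    · exact le_max_right _ _
    · exact le_trans (leFinSup (fun i : Fin n => g i.castSucc) j) (le_max_left _ _)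
  · exact le_trans (hg (Fin.last n)) (le_max_right _ _)
  · exact Real.iSup_le (fun j => leFinSup g j.castSucc) (le_trans (hg (Fin.last n)) (leFinSup g _))

variable {F V : Type*} [Field F] [AddCommGroup V] [Module F V]
variable (v : AbsoluteValue F ℝ)
variable (N : V → ℝ)

section basic
variable (hN0 : ∀ x : V, N x = 0 ↔ x = 0)
    (hNsmul : ∀ (c : F) (x : V), N (c • x) = v c * N x)
    (hNadd : ∀ x y : V, N (x + y) ≤ max (N x) (N y))

include hNsmul in
lemma N_neg (x : V) : N (-x) = N x := by
  have h : (-1 : F) • x = -x := by simp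
  rw [← h, hNsmul, v.map_neg, map_one, one_mul]

include hN0 hNsmul hNadd in
lemma N_nonneg (x : V) : 0 ≤ N x := by
  have h0 : N (0 : V) = 0 := (hN0 0).2 rfl
  have h := hNadd x (-x)
  rw [add_neg_cancel, h0, N_neg v N hNsmul, max_self] at h
  exact h

include hN0 hNsmul hNadd in
lemma N_add_eq_max {x y : V} (h : N x ≠ N y) : N (x + y) = max (N x) (N y) := by
  wlog hlt : N y < N x generalizing x y
  · rw [add_comm, max_comm]
    exact this h.symm (lt_of_le_of_ne (not_lt.1 hlt) h)
  rw [max_eq_left hlt.le]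
  refine le_antisymm (le_trans (hNadd x y) (by rw [max_eq_left hlt.le])) ?_
  have hx : N ((x + y) + (-y)) = N x := by rw [add_neg_cancel_right]
  by_contra hc
  push_neg at hc
  have := hNadd (x + y) (-y)
  rw [hx, N_neg v N hNsmul] at this
  rcases max_cases (N (x+y)) (N y) with ⟨he, _⟩ | ⟨he, _⟩ <;> rw [he] at this <;> linarith

include hN0 hNsmul hNadd in
lemma N_sub_le (x y : V) : N (x - y) ≤ max (N x) (N y) := by
  rw [sub_eq_add_neg]
  simpa [N_neg v N hNsmul] using hNadd x (-y)

end basic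

section min

variable (σ : ℝ) (hσ0 : 0 < σ) (hσ1 : σ < 1)
    (hdisc : ∀ x : F, x ≠ 0 → ∃ n : ℤ, v x = σ ^ n)
    (hcomplete : ∀ a : ℕ → F,
      (∀ ε : ℝ, 0 < ε → ∃ n₀ : ℕ, ∀ m n : ℕ, n₀ ≤ m → n₀ ≤ n → v (a m - a n) < ε) →
      ∃ L : F, Tendsto (fun n => v (a n - L)) atTop (nhds 0))
    (hN0 : ∀ x : V, N x = 0 ↔ x = 0)
    (hNsmul : ∀ (c : F) (x : V), N (c • x) = v c * N x)
    (hNadd : ∀ x y : V, N (x + y) ≤ max (N x) (N y))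

include hσ0 hσ1 hdisc hcomplete hN0 hNsmul hNadd in
lemma exists_min (W : Submodule F V) (n : ℕ) (e : Module.Basis (Fin n) F W)
    (he : ∀ lam : Fin n → F, N (∑ i, lam i • (e i : V)) = ⨆ i, v (lam i) * N (e i : V))
    (x : V) (hx : x ∉ W) :
    ∃ w₀ : W, ∀ w : W, N (x - ↑w₀) ≤ N (x - ↑w) := by
  set c : Fin n → ℝ := fun i => N (e i : V) with hc_def
  have hc : ∀ i, 0 < c i := by
    intro i
    refine lt_of_le_of_ne (N_nonneg v N hN0 hNsmul hNadd _) (Ne.symm ?_)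
    rw [Ne, hN0, Submodule.coe_eq_zero]
    exact e.ne_zero i
  have hNw : ∀ w : W, N ↑w = ⨆ i, v (e.repr w i) * c i := by
    intro w
    have h1 : (↑w : V) = ∑ i, e.repr w i • (e i : V) := by
      conv_lhs => rw [← Module.Basis.sum_repr e w]
      push_cast
      rfl
    rw [h1, he]
  have hcoord : ∀ (w : W) (i : Fin n), v (e.repr w i) * c i ≤ N ↑w := by
    intro w i
    rw [hNw w]
    exact leFinSup (fun j => v (e.repr w j) * c j) i
  by_cases hd : ∀ δ : ℝ, 0 < δ → ∃ w : W, N (x - ↑w) < δ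
  · exfalso
    choose w hw using fun k : ℕ => hd (1 / (k + 1)) (by positivity)
    set a : Fin n → ℕ → F := fun i k => e.repr (w k) i with ha_def
    have hwdiff : ∀ m k : ℕ, N ↑(w m - w k) ≤ max (1 / ((m:ℝ) + 1)) (1 / ((k:ℝ) + 1)) := by
      intro m k
      have h1 : (↑(w m - w k) : V) = (x - ↑(w k)) - (x - ↑(w m)) := by
        push_cast; abel
      rw [h1]
      refine le_trans (N_sub_le v N hN0 hNsmul hNadd _ _) ?_
      rw [max_comm]
      exact max_le_max (hw m).le (hw k).le
    have hcauchy : ∀ i : Fin n, ∀ ε : ℝ, 0 < ε →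
        ∃ n₀ : ℕ, ∀ m k : ℕ, n₀ ≤ m → n₀ ≤ k → v (a i m - a i k) < ε := by
      intro i ε hε
      obtain ⟨n₀, hn₀⟩ := exists_nat_one_div_lt (mul_pos hε (hc i))
      refine ⟨n₀, fun m k hm hk => ?_⟩
      have h2 : v (a i m - a i k) * c i ≤ N ↑(w m - w k) := by
        have : a i m - a i k = e.repr (w m - w k) i := by simp [ha_def]
        rw [this]
        exact hcoord _ i
      have h3 : N ↑(w m - w k) ≤ 1 / ((n₀:ℝ) + 1) := by
        refine le_trans (hwdiff m k) (max_le ?_ ?_) <;>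
        · apply one_div_le_one_div_of_le (by positivity)
          push_cast
          gcongr
      have h4 : v (a i m - a i k) * c i < ε * c i := lt_of_le_of_lt (h2.trans h3) hn₀
      exact lt_of_mul_lt_mul_right h4 (hc i).le
    choose L hL using fun i => hcomplete (a i) (hcauchy i)
    set winf : W := ∑ i, L i • e i with hwinf_def
    have hrepr : ∀ (k : ℕ) (i : Fin n), e.repr (w k - winf) i = a i k - L i := by
      intro k i
      rw [map_sub, Finsupp.sub_apply, hwinf_def]
      have h := Module.Basis.repr_sum_self e L
      rw [show ((e.repr (∑ i, L i • e i)) i : F) = L i from by rw [h]]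
    have hxw : N (x - ↑winf) = 0 := by
      have hub : ∀ ε : ℝ, 0 < ε → N (x - ↑winf) < ε := by
        intro ε hε
        obtain ⟨k₀, hk₀⟩ := exists_nat_one_div_lt hε
        have hev : ∀ i : Fin n, ∃ K : ℕ, ∀ k, K ≤ k → v (a i k - L i) * c i ≤ ε / 2 := by
          intro i
          have ht := hL i
          rw [Metric.tendsto_atTop] at ht
          obtain ⟨K, hK⟩ := ht ((ε / 2) / c i) (div_pos (by positivity) (hc i))
          refine ⟨K, fun k hk => ?_⟩
          have h14 := hK k hk
          rw [Real.dist_eq, sub_zero, abs_of_nonneg (v.nonneg _)] at h14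
          have h9 : v (a i k - L i) * c i < ((ε / 2) / c i) * c i :=
            mul_lt_mul_of_pos_right h14 (hc i)
          rw [div_mul_cancel₀ _ (ne_of_gt (hc i))] at h9
          exact h9.le
        choose K hK using hev
        set kk : ℕ := max k₀ (Finset.univ.sup K) with hkk
        have h10 : N (x - ↑(w kk)) < ε := by
          calc N (x - ↑(w kk)) < 1 / ((kk:ℝ) + 1) := hw kk
            _ ≤ 1 / ((k₀:ℝ) + 1) := by
                apply one_div_le_one_div_of_le (by positivity)
                have : k₀ ≤ kk := le_max_left _ _
                push_cast
                gcongr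
            _ < ε := hk₀
        have h11 : N ↑(w kk - winf) ≤ ε / 2 := by
          rw [hNw]
          refine finSupLe _ _ (fun i => ?_) (by positivity)
          rw [hrepr kk i]
          exact hK i kk (le_trans (Finset.le_sup (Finset.mem_univ i)) (le_max_right _ _))
        have h12 : N (x - ↑winf) ≤ max (N (x - ↑(w kk))) (N ↑(w kk - winf)) := by
          have h13 : x - ↑winf = (x - ↑(w kk)) + ↑(w kk - winf) := by push_cast; abel
          rw [h13]
          exact hNadd _ _
        exact lt_of_le_of_lt h12 (max_lt h10 (lt_of_le_of_lt h11 (by linarith)))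
      have h0 := N_nonneg v N hN0 hNsmul hNadd (x - ↑winf)
      by_contra hne
      have hpos : 0 < N (x - ↑winf) := lt_of_le_of_ne h0 (Ne.symm hne)
      exact absurd (hub _ hpos) (lt_irrefl _)
    exact hx (by
      have : x = ↑winf := by rwa [← sub_eq_zero, ← hN0]
      rw [this]; exact winf.2)
  · push_neg at hd
    obtain ⟨δ, hδ, hlb⟩ := hd
    by_contra hmin
    push_neg at hmin
    set t₁ : ℝ := N (x - ↑(0 : W)) with ht₁
    set T' : Set ℝ := {t | (∃ w : W, N (x - ↑w) = t) ∧ δ ≤ t ∧ t ≤ t₁} with hT'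
    have hT'ne : T'.Nonempty := ⟨t₁, ⟨0, rfl⟩, hlb 0, le_refl _⟩
    have hT'fin : T'.Finite := by
      have hsub : T' ⊆ ⋃ i : Fin n, (fun k : ℤ => c i * σ ^ k) ''
          {k : ℤ | δ ≤ c i * σ ^ k ∧ c i * σ ^ k ≤ t₁} := by
        rintro t ⟨⟨w, hwt⟩, hdt, htt⟩
        obtain ⟨w', hw'⟩ := hmin w
        rw [hwt] at hw'
        have htpos : 0 < t := lt_of_lt_of_le hδ hdt
        set u : W := w' - w with hu
        have huv : (↑u : V) = (x - ↑w) - (x - ↑w') := by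
          rw [hu]; push_cast; abel
        have hNu : N ↑u = t := by
          have h7 : N ((x - ↑w) + (-(x - ↑w'))) = max (N (x - ↑w)) (N (-(x - ↑w'))) :=
            N_add_eq_max v N hN0 hNsmul hNadd (by
              rw [N_neg v N hNsmul, hwt]
              exact ne_of_gt hw')
          rw [huv, sub_eq_add_neg, h7, N_neg v N hNsmul, hwt]
          exact max_eq_left hw'.le
        rcases isEmpty_or_nonempty (Fin n) with hni | hni
        · exfalso
          rw [hNw, supEmpty] at hNu
          exact absurd hNu.symm (ne_of_gt htpos)
        · obtain ⟨i₀, hi₀⟩ := Finite.exists_max (fun i => v (e.repr u i) * c i)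
          have hNu' : v (e.repr u i₀) * c i₀ = t := by
            rw [hNw] at hNu
            rw [← hNu]
            exact le_antisymm (leFinSup (fun j => v (e.repr u j) * c j) i₀)
              (Real.iSup_le hi₀ (mul_nonneg (v.nonneg _) (hc i₀).le))
          have hrne : e.repr u i₀ ≠ 0 := by
            intro h
            rw [h, map_zero, zero_mul] at hNu'
            exact absurd hNu'.symm (ne_of_gt htpos)
          obtain ⟨k, hk⟩ := hdisc _ hrne
          have hkey : c i₀ * σ ^ k = t := by
            rw [← hk, mul_comm]
            exact hNu'
          refine Set.mem_iUnion.2 ⟨i₀, k, ⟨?_, ?_⟩, hkey⟩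
          · rw [hkey]; exact hdt
          · rw [hkey]; exact htt
      refine Set.Finite.subset (Set.finite_iUnion fun i => Set.Finite.image _ ?_) hsub
      have hct : 0 < t₁ := lt_of_lt_of_le hδ (hlb 0)
      obtain ⟨m₁, hm₁⟩ := exists_pow_lt_of_lt_one (div_pos hδ (hc i)) hσ1
      obtain ⟨m₂, hm₂⟩ := exists_pow_lt_of_lt_one (div_pos (hc i) hct) hσ1
      refine Set.Finite.subset (Set.finite_Icc (-(m₂ : ℤ)) (m₁ : ℤ)) ?_
      rintro k ⟨hk1, hk2⟩
      constructor
      · have h5 : σ ^ k ≤ t₁ / c i := (le_div_iff₀ (hc i)).2 (by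
          rw [mul_comm]; exact hk2)
        have hp : (0:ℝ) < σ ^ m₂ := by positivity
        have hm₂' : σ ^ m₂ * t₁ < c i := (lt_div_iff₀ hct).1 hm₂
        have h6 : t₁ / c i < σ ^ (-(m₂ : ℤ)) := by
          rw [zpow_neg, zpow_natCast, div_lt_iff₀ (hc i)]
          have h15 := mul_lt_mul_of_pos_left hm₂' (inv_pos.2 hp)
          rw [← mul_assoc, inv_mul_cancel₀ (ne_of_gt hp), one_mul] at h15
          linarith [h15]
        have h16 := lt_of_le_of_lt h5 h6
        have h17 := (zpow_lt_zpow_iff_right_of_lt_one₀ hσ0 hσ1).1 h16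
        omega
      · have h5 : δ / c i ≤ σ ^ k := (div_le_iff₀ (hc i)).2 (by
          rw [mul_comm]; exact hk1)
        have h6 : (σ : ℝ) ^ (m₁ : ℤ) < σ ^ k := by
          rw [zpow_natCast]
          exact lt_of_lt_of_le hm₁ h5
        have h17 := (zpow_lt_zpow_iff_right_of_lt_one₀ hσ0 hσ1).1 h6
        omega
    have hm := Set.Nonempty.csInf_mem hT'ne hT'fin
    obtain ⟨⟨wm, hwm⟩, hdm, hmt⟩ := hm
    obtain ⟨w'', hw''⟩ := hmin wm
    rw [hwm] at hw''
    have hmem : N (x - ↑w'') ∈ T' := ⟨⟨w'', rfl⟩, hlb w'', le_trans hw''.le hmt⟩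
    exact absurd (csInf_le hT'fin.bddBelow hmem) (not_le.2 hw'')

end min
end helpers

section induction

universe u

lemma ortho_ind {F : Type*} [Field F] (v : AbsoluteValue F ℝ)
    (σ : ℝ) (hσ0 : 0 < σ) (hσ1 : σ < 1)
    (hdisc : ∀ x : F, x ≠ 0 → ∃ n : ℤ, v x = σ ^ n)
    (hcomplete : ∀ a : ℕ → F,
      (∀ ε : ℝ, 0 < ε → ∃ n₀ : ℕ, ∀ m n : ℕ, n₀ ≤ m → n₀ ≤ n → v (a m - a n) < ε) →
      ∃ L : F, Tendsto (fun n => v (a n - L)) atTop (nhds 0))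
    (n : ℕ) :
    ∀ (V : Type u) [AddCommGroup V] [Module F V] (N : V → ℝ),
      (∀ x : V, N x = 0 ↔ x = 0) →
      (∀ (c : F) (x : V), N (c • x) = v c * N x) →
      (∀ x y : V, N (x + y) ≤ max (N x) (N y)) →
      Module.Basis (Fin n) F V →
      ∃ b : Module.Basis (Fin n) F V, ∀ lam : Fin n → F,
        N (∑ i, lam i • b i) = ⨆ i, v (lam i) * N (b i) := by
  induction n with
  | zero =>
    intro V _ _ N hN0 _ _ b0
    refine ⟨b0, fun lam => ?_⟩
    rw [Finset.univ_eq_empty, Finset.sum_empty, (hN0 0).2 rfl, supEmpty]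
  | succ n IH =>
    intro V _ _ N hN0 hNsmul hNadd b0
    set W : Submodule F V := Submodule.span F (Set.range fun i : Fin n => b0 i.castSucc)
      with hW
    have hli : LinearIndependent F (fun i : Fin n => b0 i.castSucc) :=
      b0.linearIndependent.comp _ (Fin.castSucc_injective n)
    obtain ⟨e, he⟩ := IH W (fun w : W => N ↑w)
      (fun w => (hN0 ↑w).trans Submodule.coe_eq_zero)
      (fun cc w => by
        show N ↑(cc • w) = v cc * N ↑w
        rw [Submodule.coe_smul, hNsmul])
      (fun w w' => by
        show N ↑(w + w') ≤ max (N ↑w) (N ↑w')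
        rw [Submodule.coe_add]; exact hNadd _ _)
      (Module.Basis.span hli)
    have he' : ∀ lam : Fin n → F,
        N (∑ i, lam i • ((e i : W) : V)) = ⨆ i, v (lam i) * N ↑(e i) := by
      intro lam
      have h := he lam
      rwa [show ((∑ i, lam i • e i : W) : V) = ∑ i, lam i • ((e i : W) : V) from by
        push_cast; rfl] at h
    set x : V := b0 (Fin.last n) with hxdef
    have hx : x ∉ W := by
      have hr : Set.range (fun i : Fin n => b0 i.castSucc)
          = ⇑b0 '' (Set.range Fin.castSucc) := by
        rw [← Set.range_comp]; rfl
      rw [hW, hr]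
      refine b0.linearIndependent.notMem_span_image ?_
      rintro ⟨j, hj⟩
      exact absurd hj (Fin.castSucc_lt_last j).ne
    obtain ⟨w₀, hw₀⟩ := exists_min v N σ hσ0 hσ1 hdisc hcomplete hN0 hNsmul hNadd
      W n e he' x hx
    set y : V := x - ↑w₀ with hy
    have hyne : y ≠ 0 := by
      intro h
      exact hx (by rw [show x = ↑w₀ from sub_eq_zero.1 h]; exact w₀.2)
    have hyW : ∀ w : W, N y ≤ N (y + ↑w) := by
      intro w
      have h : y + ↑w = x - ↑(w₀ - w) := by rw [hy]; push_cast; abel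
      rw [h]
      exact hw₀ _
    have hkey : ∀ (cc : F) (w : W), N (cc • y + ↑w) = max (v cc * N y) (N ↑w) := by
      intro cc w
      rcases eq_or_ne cc 0 with rfl | hcc
      · rw [map_zero, zero_smul, zero_add, zero_mul]
        exact (max_eq_right (N_nonneg v N hN0 hNsmul hNadd _)).symm
      · have h1 : cc • y + ↑w = cc • (y + ↑(cc⁻¹ • w)) := by
          push_cast
          rw [smul_add, smul_smul, mul_inv_cancel₀ hcc, one_smul]
        have h2 : N (y + ↑(cc⁻¹ • w)) = max (N y) (N ↑(cc⁻¹ • w)) := by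
          rcases eq_or_ne (N ↑(cc⁻¹ • w)) (N y) with heq | hne
          · rw [heq, max_self]
            refine le_antisymm (le_trans (hNadd _ _) ?_) (hyW _)
            rw [heq, max_self]
          · exact N_add_eq_max v N hN0 hNsmul hNadd (Ne.symm hne)
        have h3 : v cc * N ↑(cc⁻¹ • w) = N ↑w := by
          rw [show ((cc⁻¹ • w : W) : V) = cc⁻¹ • (w : V) from by push_cast; rfl,
            hNsmul, ← mul_assoc, ← v.map_mul, mul_inv_cancel₀ hcc, v.map_one, one_mul]
        rw [h1, hNsmul, h2, mul_max_of_nonneg _ _ (v.nonneg cc), h3]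
    set f : Fin (n + 1) → V := Fin.snoc (fun i => ((e i : W) : V)) y with hf
    have hfcast : ∀ i : Fin n, f i.castSucc = ((e i : W) : V) := by
      intro i; rw [hf]; exact Fin.snoc_castSucc _ _ _
    have hflast : f (Fin.last n) = y := by rw [hf]; exact Fin.snoc_last _ _
    have horth : ∀ lam : Fin (n + 1) → F,
        N (∑ i, lam i • f i) = ⨆ i, v (lam i) * N (f i) := by
      intro lam
      have hsum : ∑ i, lam i • f i
          = lam (Fin.last n) • y + ↑(∑ i : Fin n, lam i.castSucc • e i) := by
        rw [Fin.sum_univ_castSucc, hflast]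
        rw [show ((∑ i : Fin n, lam i.castSucc • e i : W) : V)
          = ∑ i : Fin n, lam i.castSucc • ((e i : W) : V) from by push_cast; rfl]
        rw [add_comm]
        congr 1
        exact Finset.sum_congr rfl fun i _ => by rw [hfcast]
      rw [hsum, hkey]
      have hWs : N ↑(∑ i : Fin n, lam i.castSucc • e i)
          = ⨆ i : Fin n, v (lam i.castSucc) * N ↑(e i) := by
        rw [show ((∑ i : Fin n, lam i.castSucc • e i : W) : V)
          = ∑ i : Fin n, lam i.castSucc • ((e i : W) : V) from by push_cast; rfl]
        exact he' fun i => lam i.castSucc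
      rw [hWs, finSupSplit n (fun i => v (lam i) * N (f i))
        (fun i => mul_nonneg (v.nonneg _) (N_nonneg v N hN0 hNsmul hNadd _))]
      rw [max_comm]
      congr 1
      · have hfun : (fun i : Fin n => v (lam i.castSucc) * N (f i.castSucc))
            = fun i : Fin n => v (lam i.castSucc) * N ↑(e i) :=
          funext fun i => by rw [hfcast]
        rw [hfun]
      · rw [hflast]
    have hfne : ∀ i : Fin (n + 1), 0 < N (f i) := by
      intro i
      refine Fin.lastCases ?_ (fun j => ?_) i
      · rw [hflast]
        refine lt_of_le_of_ne (N_nonneg v N hN0 hNsmul hNadd _) (Ne.symm ?_)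
        rw [Ne, hN0]
        exact hyne
      · rw [hfcast]
        refine lt_of_le_of_ne (N_nonneg v N hN0 hNsmul hNadd _) (Ne.symm ?_)
        rw [Ne, hN0, Submodule.coe_eq_zero]
        exact e.ne_zero j
    have hlin : LinearIndependent F f := by
      rw [Fintype.linearIndependent_iff]
      intro g hg i
      have h0 : N (∑ i, g i • f i) = 0 := by rw [hg]; exact (hN0 0).2 rfl
      rw [horth] at h0
      have hterm : v (g i) * N (f i) ≤ 0 := by
        rw [← h0]
        exact leFinSup (fun j => v (g j) * N (f j)) i
      have hterm' : v (g i) * N (f i) = 0 :=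
        le_antisymm hterm (mul_nonneg (v.nonneg _) (hfne i).le)
      have hv0 : v (g i) = 0 := by
        rcases mul_eq_zero.1 hterm' with h | h
        · exact h
        · exact absurd h (ne_of_gt (hfne i))
      exact v.eq_zero.1 hv0
    have hcard : Fintype.card (Fin (n + 1)) = Module.finrank F V := by
      rw [Module.finrank_eq_card_basis b0]
    refine ⟨basisOfLinearIndependentOfCardEqFinrank hlin hcard, fun lam => ?_⟩
    simp only [coe_basisOfLinearIndependentOfCardEqFinrank]
    exact horth lam

end induction


/-- Every finite-dimensional normed vector space over a complete discretely valued non-archimedean field admits an orthogonal basis. -/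
theorem stmt6 {F V : Type*} [Field F] [AddCommGroup V] [Module F V] [FiniteDimensional F V]
    (v : AbsoluteValue F ℝ) (hna : ∀ x y : F, v (x + y) ≤ max (v x) (v y))
    (σ : ℝ) (hσ0 : 0 < σ) (hσ1 : σ < 1)
    (hdisc : ∀ x : F, x ≠ 0 → ∃ n : ℤ, v x = σ ^ n)
    (hcomplete : ∀ a : ℕ → F,
      (∀ ε : ℝ, 0 < ε → ∃ n₀ : ℕ, ∀ m n : ℕ, n₀ ≤ m → n₀ ≤ n → v (a m - a n) < ε) →
      ∃ L : F, Tendsto (fun n => v (a n - L)) atTop (nhds 0))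
    (N : V → ℝ)
    (hN0 : ∀ x : V, N x = 0 ↔ x = 0)
    (hNsmul : ∀ (c : F) (x : V), N (c • x) = v c * N x)
    (hNadd : ∀ x y : V, N (x + y) ≤ max (N x) (N y)) :
    ∃ b : Module.Basis (Fin (Module.finrank F V)) F V,
      ∀ lam : Fin (Module.finrank F V) → F,
        N (∑ i, lam i • b i) = ⨆ i, v (lam i) * N (b i) :=
  ortho_ind v σ hσ0 hσ1 hdisc hcomplete (Module.finrank F V) V N hN0 hNsmul hNadd
    (Module.finBasis F V)
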